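/- If (x, X, y, Y₁₂, α) ∈ ℝ² × Sym₂(ℝ) × ℝ² × ℝ × ℝ² satisfies the linear conditions (L), then it satisfies the PSD condition (P3). -/

import Mathlib

open Matrix

set_option linter.unusedVariables false

/-- Linear conditions (L). -/
def Lcond (x1 x2 X11 X12 X22 y1 y2 Y12 a1 a2 : ℝ) : Prop :=
  X11 ≤ x1 ∧ x1 ≤ y1 ∧ X22 ≤ x2 ∧ x2 ≤ y2 ∧
  max 0 (x1 - a1 + x2 - a2 - Y12) ≤ X12 ∧ X12 ≤ min (x1 - a1) (x2 - a2) ∧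
  0 ≤ a1 ∧ a1 ≤ y1 - Y12 ∧ 0 ≤ a2 ∧ a2 ≤ y2 - Y12 ∧
  max 0 (y1 + y2 - 1) ≤ Y12 ∧ Y12 ≤ min y1 y2

/-- PSD condition (P3). -/
def P3cond (x1 x2 X11 X12 X22 y1 y2 Y12 a1 a2 : ℝ) : Prop :=
  (!![Y12, x1 - a1, x2 - a2;
      x1 - a1, x1 - a1, X12;
      x2 - a2, X12, x2 - a2] : Matrix (Fin 3) (Fin 3) ℝ).PosSemidef

/-- PSD condition (P4a). -/
def P4acond (x1 x2 X11 X12 X22 y1 y2 Y12 a1 a2 : ℝ) : Prop :=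
  (!![y1 - Y12, 0, a1, 0;
      0, Y12, x1 - a1, x2 - a2;
      a1, x1 - a1, X11, X12;
      0, x2 - a2, X12, x2 - a2] : Matrix (Fin 4) (Fin 4) ℝ).PosSemidef

/-- PSD condition (P4b). -/
def P4bcond (x1 x2 X11 X12 X22 y1 y2 Y12 a1 a2 : ℝ) : Prop :=
  (!![y2 - Y12, 0, 0, a2;
      0, Y12, x1 - a1, x2 - a2;
      0, x1 - a1, x1 - a1, X12;
      a2, x2 - a2, X12, X22] : Matrix (Fin 4) (Fin 4) ℝ).PosSemidef

/-- PSD condition (P5). -/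
def P5cond (x1 x2 X11 X12 X22 y1 y2 Y12 a1 a2 : ℝ) : Prop :=
  (!![y1 - Y12, 0, 0, a1, 0;
      0, y2 - Y12, 0, 0, a2;
      0, 0, Y12, x1 - a1, x2 - a2;
      a1, 0, x1 - a1, X11, X12;
      0, a2, x2 - a2, X12, X22] : Matrix (Fin 5) (Fin 5) ℝ).PosSemidef

/-- The linear conditions (L) imply the PSD condition (P3). -/
theorem stmt5 (x1 x2 X11 X12 X22 y1 y2 Y12 a1 a2 : ℝ)
    (hL : Lcond x1 x2 X11 X12 X22 y1 y2 Y12 a1 a2) :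
    P3cond x1 x2 X11 X12 X22 y1 y2 Y12 a1 a2 := by
  obtain ⟨h1, h2, h3, h4, h5, h6, h7, h8, h9, h10, h11, h12⟩ := hL
  have h5a : (0:ℝ) ≤ X12 := le_trans (le_max_left _ _) h5
  have h5b : x1 - a1 + x2 - a2 - Y12 ≤ X12 := le_trans (le_max_right _ _) h5
  have h6a : X12 ≤ x1 - a1 := le_trans h6 (min_le_left _ _)
  have h6b : X12 ≤ x2 - a2 := le_trans h6 (min_le_right _ _)
  rw [P3cond, Matrix.posSemidef_iff_dotProduct_mulVec]
  constructor
  · ext i j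
    fin_cases i <;> fin_cases j <;>
      simp [Matrix.conjTranspose_apply]
  · intro v
    simp only [dotProduct, Matrix.mulVec, Fin.sum_univ_three, star_trivial,
      Matrix.of_apply, Matrix.cons_val', Matrix.cons_val_zero, Matrix.cons_val_one, Matrix.head_cons,
      Matrix.empty_val', Matrix.cons_val_fin_one, Matrix.head_fin_const,
      Matrix.cons_val_two, Matrix.tail_cons]
    nlinarith [sq_nonneg (v 0 + v 1 + v 2), sq_nonneg (v 0 + v 1), sq_nonneg (v 0 + v 2),
      sq_nonneg (v 0), mul_nonneg h5a (sq_nonneg (v 0 + v 1 + v 2)),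
      mul_nonneg (sub_nonneg.2 h6a) (sq_nonneg (v 0 + v 1)),
      mul_nonneg (sub_nonneg.2 h6b) (sq_nonneg (v 0 + v 2)),
      mul_nonneg (by linarith : (0:ℝ) ≤ Y12 - (x1 - a1) - (x2 - a2) + X12) (sq_nonneg (v 0))]
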